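/- Let V be a vector space over a field. The monoid L(V) of all linear maps V → V under composition is unit-regular if and only if V is finite-dimensional. -/

import Mathlib

/-- An element `s` of a monoid is unit-regular if `s * u * s = s` for some unit `u`. -/
def IsUnitRegular {M : Type*} [Monoid M] (s : M) : Prop :=
  ∃ u : Mˣ, s * (↑u : M) * s = s

open Classical in
lemma aux_inj_not_surj (ι : Type*) [Infinite ι] :
    ∃ g : ι → ι, Function.Injective g ∧ ¬ Function.Surjective g := by
  classical
  let e := Infinite.natEmbedding ι
  refine ⟨fun x => if h : ∃ n, e n = x then e (h.choose + 1) else x, ?_, ?_⟩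
  · intro a b hab
    dsimp only at hab
    by_cases ha : ∃ n, e n = a <;> by_cases hb : ∃ n, e n = b
    · rw [dif_pos ha, dif_pos hb] at hab
      have h1 : e ha.choose = a := ha.choose_spec
      have h2 : e hb.choose = b := hb.choose_spec
      have := e.injective hab
      rw [← h1, ← h2]
      exact congrArg e (by omega)
    · rw [dif_pos ha, dif_neg hb] at hab
      exact absurd ⟨_, hab⟩ hb
    · rw [dif_neg ha, dif_pos hb] at hab
      exact absurd ⟨_, hab.symm⟩ ha
    · rwa [dif_neg ha, dif_neg hb] at hab
  · intro hs
    obtain ⟨x, hx⟩ := hs (e 0)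
    dsimp only at hx
    by_cases h : ∃ n, e n = x
    · rw [dif_pos h] at hx
      exact Nat.succ_ne_zero _ (e.injective hx)
    · rw [dif_neg h] at hx
      exact h ⟨0, hx.symm⟩

theorem stmt11 {K V : Type*} [Field K] [AddCommGroup V] [Module K V] :
    (∀ f : Module.End K V, IsUnitRegular f) ↔ FiniteDimensional K V := by
  constructor
  · intro h
    by_contra hinf
    let b := Module.Basis.ofVectorSpace K V
    have hι : Infinite (Module.Basis.ofVectorSpaceIndex K V) := by
      by_contra hfin
      have : Fintype (Module.Basis.ofVectorSpaceIndex K V) := fintypeOfNotInfinite hfin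
      exact hinf (Module.Finite.of_basis b)
    obtain ⟨g, hginj, hgsurj⟩ := aux_inj_not_surj (Module.Basis.ofVectorSpaceIndex K V)
    let f : Module.End K V :=
      (b.repr.symm.toLinearMap ∘ₗ Finsupp.lmapDomain K K g) ∘ₗ b.repr.toLinearMap
    have hfapp : ∀ x, f x = b.repr.symm (Finsupp.mapDomain g (b.repr x)) := by
      intro x
      simp only [f, LinearMap.comp_apply, LinearEquiv.coe_coe, Finsupp.lmapDomain_apply]
    have hfinj : Function.Injective f := by
      intro a c hac
      rw [hfapp, hfapp] at hac
      have := Finsupp.mapDomain_injective hginj (b.repr.symm.injective hac)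
      exact b.repr.injective this
    have hfnsurj : ¬ Function.Surjective f := by
      intro hs
      obtain ⟨i₀, hi₀⟩ := not_forall.1 hgsurj
      obtain ⟨x, hx⟩ := hs (b.repr.symm (Finsupp.single i₀ 1))
      rw [hfapp] at hx
      have hmd : Finsupp.mapDomain g (b.repr x) = Finsupp.single i₀ 1 :=
        b.repr.symm.injective hx
      have h0 : Finsupp.mapDomain g (b.repr x) i₀ = 0 :=
        Finsupp.mapDomain_notin_range _ _ (by simpa using hi₀)
      rw [hmd, Finsupp.single_eq_same] at h0
      exact one_ne_zero h0
    obtain ⟨u, hu⟩ := h f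
    set w : Module.End K V := ((u⁻¹ : (Module.End K V)ˣ) : Module.End K V) with hw
    have huf : ∀ x, (u : Module.End K V) (f x) = x := by
      intro x
      apply hfinj
      have := LinearMap.congr_fun hu x
      rw [Module.End.mul_apply, Module.End.mul_apply] at this
      exact this
    have hfw : ∀ z, f z = w z := by
      intro z
      have h1 : (w * (u : Module.End K V)) (f z) = f z := by
        rw [hw, u.inv_mul, Module.End.one_apply]
      rw [Module.End.mul_apply] at h1
      rw [huf z] at h1
      exact h1.symm
    apply hfnsurj
    intro y
    refine ⟨(u : Module.End K V) y, ?_⟩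
    rw [hfw]
    have h1 : (w * (u : Module.End K V)) y = y := by
      rw [hw, u.inv_mul, Module.End.one_apply]
    rw [Module.End.mul_apply] at h1
    exact h1
  · intro hfd f
    obtain ⟨C, hC⟩ := Submodule.exists_isCompl (LinearMap.ker f)
    obtain ⟨D, hD⟩ := Submodule.exists_isCompl (LinearMap.range f)
    have hCk : IsCompl C (LinearMap.ker f) := hC.symm
    have hmapker : Submodule.map f (LinearMap.ker f) = ⊥ := by
      rw [Submodule.eq_bot_iff]
      rintro y ⟨x, hx, rfl⟩
      exact hx
    have hmapC : LinearMap.range (f.domRestrict C) = LinearMap.range f := by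
      rw [LinearMap.range_domRestrict, LinearMap.range_eq_map, ← hCk.sup_eq_top,
        Submodule.map_sup, hmapker, sup_bot_eq]
    have hinjC : Function.Injective (f.domRestrict C) := by
      intro a c hac
      have hab : f (a : V) = f (c : V) := by
        simpa [LinearMap.domRestrict_apply] using hac
      have h1 : ((a : V) - c) ∈ LinearMap.ker f := by
        rw [LinearMap.mem_ker, map_sub, hab, sub_self]
      have h2 : ((a : V) - c) ∈ C := sub_mem a.2 c.2
      have h0 : ((a : V) - c) = 0 := Submodule.disjoint_def.1 hCk.disjoint _ h2 h1
      exact Subtype.ext (by rwa [sub_eq_zero] at h0)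
    let eC : C ≃ₗ[K] LinearMap.range f :=
      (LinearEquiv.ofInjective _ hinjC).trans (LinearEquiv.ofEq _ _ hmapC)
    have heC : ∀ c : C, (eC c : V) = f c := by
      intro c
      simp [eC, LinearEquiv.ofInjective_apply, LinearMap.domRestrict_apply]
    have hdim : Module.finrank K (LinearMap.ker f) = Module.finrank K D := by
      have h1 := LinearMap.finrank_range_add_finrank_ker f
      have h2 := Submodule.finrank_add_eq_of_isCompl hD
      omega
    let eK : (LinearMap.ker f) ≃ₗ[K] D := LinearEquiv.ofFinrankEq _ _ hdim
    let v : V ≃ₗ[K] V :=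
      (Submodule.prodEquivOfIsCompl C (LinearMap.ker f) hCk).symm.trans
        ((eC.prodCongr eK).trans (Submodule.prodEquivOfIsCompl (LinearMap.range f) D hD))
    refine ⟨⟨v.symm.toLinearMap, v.toLinearMap, ?_, ?_⟩, ?_⟩
    · ext x; simp [Module.End.mul_apply]
    · ext x; simp [Module.End.mul_apply]
    · have hvC : ∀ c : C, v (c : V) = f c := by
        intro c
        simp only [v, LinearEquiv.trans_apply, Submodule.prodEquivOfIsCompl_symm_apply_left,
          LinearEquiv.prodCongr_apply, Submodule.coe_prodEquivOfIsCompl']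
        rw [map_zero]
        simp [heC]
      ext x
      simp only [Module.End.mul_apply, Units.val_mk, LinearEquiv.coe_coe]
      set π := Submodule.linearProjOfIsCompl C (LinearMap.ker f) hCk with hπ
      have hker : x - (π x : V) ∈ LinearMap.ker f := by
        rw [← Submodule.linearProjOfIsCompl_apply_eq_zero_iff hCk, map_sub, hπ,
          Submodule.linearProjOfIsCompl_apply_left]
        exact sub_self _
      have hfx : f x = f (π x : V) := by
        have := LinearMap.mem_ker.1 hker
        rw [map_sub, sub_eq_zero] at this
        exact this
      rw [hfx, ← hvC (π x), LinearEquiv.symm_apply_apply]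
      exact (hvC (π x)).symm
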